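/- In Aut(F_n), for distinct indices p, q, k one has the identity ρ_{pk} K_{kpq} ρ_{pk}^{−1} = K_{qk} K_{qp} K_{pq} K_{pqk} K_{kp} K_{kpq} K_{kq}^{−1} K_{kp}^{−1} K_{qp}^{−1} K_{qk}^{−1}. -/

import Mathlib

namespace FoldDecomp

open FreeGroup

variable {n : ℕ}

/-- Build an automorphism of the free group from images of generators plus an inverse system. -/
def mkAut (f g : Fin n → FreeGroup (Fin n))
    (h1 : ∀ k, FreeGroup.lift g (f k) = FreeGroup.of k)
    (h2 : ∀ k, FreeGroup.lift f (g k) = FreeGroup.of k) :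
    MulAut (FreeGroup (Fin n)) where
  toFun := FreeGroup.lift f
  invFun := FreeGroup.lift g
  left_inv := fun x => by
    have h : (FreeGroup.lift g).comp (FreeGroup.lift f) = MonoidHom.id _ :=
      FreeGroup.ext_hom _ _ (by simp [h1])
    simpa using DFunLike.congr_fun h x
  right_inv := fun x => by
    have h : (FreeGroup.lift f).comp (FreeGroup.lift g) = MonoidHom.id _ :=
      FreeGroup.ext_hom _ _ (by simp [h2])
    simpa using DFunLike.congr_fun h x
  map_mul' := map_mul _

/-- The right Nielsen automorphism `ρ i j`, sending `xᵢ ↦ xᵢxⱼ` and fixing the other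
generators. -/
def rho (i j : Fin n) (hij : i ≠ j) : MulAut (FreeGroup (Fin n)) :=
  mkAut (fun k => if k = i then of i * of j else of k)
    (fun k => if k = i then of i * (of j)⁻¹ else of k)
    (by
      intro k
      by_cases hk : k = i
      · subst hk
        simp [if_neg (Ne.symm hij)]
      · simp [hk])
    (by
      intro k
      by_cases hk : k = i
      · subst hk
        simp [if_neg (Ne.symm hij)]
      · simp [hk])

/-- The partial conjugation `K i j`, sending `xᵢ ↦ xⱼxᵢxⱼ⁻¹` and fixing the other generators. -/
def Kc (i j : Fin n) (hij : i ≠ j) : MulAut (FreeGroup (Fin n)) :=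
  mkAut (fun k => if k = i then of j * of i * (of j)⁻¹ else of k)
    (fun k => if k = i then (of j)⁻¹ * of i * of j else of k)
    (by
      intro k
      by_cases hk : k = i
      · subst hk
        simp [if_neg (Ne.symm hij)]
        group
      · simp [hk])
    (by
      intro k
      by_cases hk : k = i
      · subst hk
        simp [if_neg (Ne.symm hij)]
        group
      · simp [hk])

/-- The inversion `S i`, sending `xᵢ ↦ xᵢ⁻¹` and fixing the other generators. -/
def Sinv (i : Fin n) : MulAut (FreeGroup (Fin n)) :=
  mkAut (fun k => if k = i then (of i)⁻¹ else of k)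
    (fun k => if k = i then (of i)⁻¹ else of k)
    (by
      intro k
      by_cases hk : k = i
      · subst hk; simp
      · simp [hk])
    (by
      intro k
      by_cases hk : k = i
      · subst hk; simp
      · simp [hk])

/-- The automorphism `K i j k`, sending `xᵢ ↦ xᵢ[xⱼ,xₖ]` and fixing the other generators,
where `[a,b] = a * b * a⁻¹ * b⁻¹`. -/
def Kcom (i j k : Fin n) (hji : j ≠ i) (hki : k ≠ i) : MulAut (FreeGroup (Fin n)) :=
  mkAut (fun l => if l = i then of i * (of j * of k * (of j)⁻¹ * (of k)⁻¹) else of l)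
    (fun l => if l = i then of i * (of k * of j * (of k)⁻¹ * (of j)⁻¹) else of l)
    (by
      intro l
      by_cases hl : l = i
      · subst hl
        simp [if_neg hji, if_neg hki]
        group
      · simp [hl])
    (by
      intro l
      by_cases hl : l = i
      · subst hl
        simp [if_neg hji, if_neg hki]
        group
      · simp [hl])

lemma mkAut_apply_of (f g h1 h2) (l : Fin n) :
    (mkAut f g h1 h2) (of l) = f l := by
  simp [mkAut]

lemma mkAut_inv_apply_of (f g h1 h2) (l : Fin n) :
    (mkAut f g h1 h2)⁻¹ (of l) = g l := by
  simp [mkAut, MulAut.inv_def, MulEquiv.symm]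

lemma rho_apply (i j : Fin n) (h : i ≠ j) (l : Fin n) :
    rho i j h (of l) = if l = i then of i * of j else of l :=
  mkAut_apply_of ..

lemma rho_inv_apply (i j : Fin n) (h : i ≠ j) (l : Fin n) :
    (rho i j h)⁻¹ (of l) = if l = i then of i * (of j)⁻¹ else of l :=
  mkAut_inv_apply_of ..

lemma Kc_apply (i j : Fin n) (h : i ≠ j) (l : Fin n) :
    Kc i j h (of l) = if l = i then of j * of i * (of j)⁻¹ else of l :=
  mkAut_apply_of ..

lemma Kc_inv_apply (i j : Fin n) (h : i ≠ j) (l : Fin n) :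
    (Kc i j h)⁻¹ (of l) = if l = i then (of j)⁻¹ * of i * of j else of l :=
  mkAut_inv_apply_of ..

lemma Kcom_apply (i j k : Fin n) (hji : j ≠ i) (hki : k ≠ i) (l : Fin n) :
    Kcom i j k hji hki (of l) =
      if l = i then of i * (of j * of k * (of j)⁻¹ * (of k)⁻¹) else of l :=
  mkAut_apply_of ..

lemma aut_ext {f g : MulAut (FreeGroup (Fin n))} (h : ∀ i, f (of i) = g (of i)) : f = g := by
  have : (f : FreeGroup (Fin n) →* FreeGroup (Fin n)) = g := FreeGroup.ext_hom _ _ h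
  exact MulEquiv.toMonoidHom_injective this

/-- The identity
`ρ_{pk} K_{kpq} ρ_{pk}⁻¹ = K_{qk} K_{qp} K_{pq} K_{pqk} K_{kp} K_{kpq} K_{kq}⁻¹ K_{kp}⁻¹ K_{qp}⁻¹ K_{qk}⁻¹`
in `Aut(F_n)`, for distinct indices `p, q, k`. -/
theorem rho_Kcom_conj (n : ℕ) (p q k : Fin n) (hpq : p ≠ q) (hpk : p ≠ k) (hqk : q ≠ k) :
    rho p k hpk * Kcom k p q hpk hqk * (rho p k hpk)⁻¹ =
      Kc q k hqk * Kc q p (Ne.symm hpq) * Kc p q hpq *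
        Kcom p q k (Ne.symm hpq) (Ne.symm hpk) * Kc k p (Ne.symm hpk) *
        Kcom k p q hpk hqk * (Kc k q (Ne.symm hqk))⁻¹ *
        (Kc k p (Ne.symm hpk))⁻¹ * (Kc q p (Ne.symm hpq))⁻¹ * (Kc q k hqk)⁻¹ := by
  apply aut_ext
  intro l
  by_cases hlp : l = p
  · subst hlp
    simp [MulAut.mul_apply, rho_apply, rho_inv_apply, Kc_apply, Kc_inv_apply, Kcom_apply,
      _root_.map_mul, _root_.map_inv, hpq, hpk, hqk, Ne.symm hpq, Ne.symm hpk, Ne.symm hqk, -MulAut.inv_apply]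
    group
  · by_cases hlq : l = q
    · subst hlq
      simp [MulAut.mul_apply, rho_apply, rho_inv_apply, Kc_apply, Kc_inv_apply, Kcom_apply,
        _root_.map_mul, _root_.map_inv, hpq, hpk, hqk, Ne.symm hpq, Ne.symm hpk, Ne.symm hqk, -MulAut.inv_apply]
      group
    · by_cases hlk : l = k
      · subst hlk
        simp [MulAut.mul_apply, rho_apply, rho_inv_apply, Kc_apply, Kc_inv_apply, Kcom_apply,
          _root_.map_mul, _root_.map_inv, hpq, hpk, hqk, Ne.symm hpq, Ne.symm hpk, Ne.symm hqk, -MulAut.inv_apply]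
        group
      · simp [MulAut.mul_apply, rho_apply, rho_inv_apply, Kc_apply, Kc_inv_apply, Kcom_apply,
          _root_.map_mul, _root_.map_inv, hlp, hlq, hlk, -MulAut.inv_apply]

end FoldDecomp
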